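/- Fix k ≥ 1 and an integer d with 1 ≤ d ≤ k+1. Then Σ_{i=1}^{d} (1 + min{k−i, k−(d+1−i)}) equals dk − 3d²/4 + d/2 if d is even, and dk − 3d²/4 + d/2 + 1/4 if d is odd. Moreover, the maximum of this sum over all integers d ≥ 1 is (k²+k+1)/3 if k ≡ 1 (mod 3) and (k²+k)/3 otherwise, attained at d = 2k/3 for k ≡ 0 (mod 3), at d = (2k+1)/3 for k ≡ 1 (mod 3), and at d = (2k+2)/3 for k ≡ 2 (mod 3). -/

import Mathlib

open SimpleGraph Finset

variable {V : Type*}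

/-- Truncated graph distance `d_k(x,y) = min(d(x,y), k+1)`. -/
noncomputable def dk (G : SimpleGraph V) (k : ℕ) (x y : V) : ℕ := min (G.dist x y) (k + 1)

/-- `w` lies on a shortest path (in a tree: the unique path) between `x` and `y`. -/
def OnPath (G : SimpleGraph V) (x y w : V) : Prop :=
  G.dist x w + G.dist w y = G.dist x y

/-- `S` is a threshold-`k` resolving set for `G`. -/
def ThresholdResolving (G : SimpleGraph V) (k : ℕ) (S : Set V) : Prop :=
  (∀ x y : V, x ≠ y → ∃ s ∈ S, dk G k s x ≠ dk G k s y) ∧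
  (∀ x : V, ∃ s ∈ S, G.dist s x ≤ k)

/-- A sensor `s` directly measures `x`: `d(s,x) ≤ k` and no other sensor lies on the
path from `s` to `x`. -/
def DirectlyMeasures (G : SimpleGraph V) (k : ℕ) (S : Set V) (s x : V) : Prop :=
  G.dist s x ≤ k ∧ ∀ t ∈ S, t ≠ s → ¬ OnPath G s x t

/-- The threshold-`k` metric dimension of a finite graph. -/
noncomputable def Tmd (G : SimpleGraph V) [Fintype V] (k : ℕ) : ℕ :=
  sInf {m | ∃ S : Finset V, ThresholdResolving G k ↑S ∧ S.card = m}

/-- The path between the sensors `s₁ ≠ s₂` contains no other sensor. -/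
def SensorPath (G : SimpleGraph V) (S : Set V) (s₁ s₂ : V) : Prop :=
  s₁ ≠ s₂ ∧ s₁ ∈ S ∧ s₂ ∈ S ∧ ∀ t ∈ S, OnPath G s₁ s₂ t → t = s₁ ∨ t = s₂

/-- The edge `{a,b}` lies on the (tree-)path between `x` and `y`. -/
def EdgeOnPath (G : SimpleGraph V) (x y a b : V) : Prop :=
  G.Adj a b ∧ OnPath G x y a ∧ OnPath G x y b

/-- A leaf-path of length `ℓ` starting at `v`: an induced path `v = p 0, p 1, …, p ℓ`
with `deg v ≥ 3`, ending in a leaf, all internal vertices of degree 2. -/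
def IsLeafPath (G : SimpleGraph V) [Fintype V] [DecidableRel G.Adj]
    (v : V) (ℓ : ℕ) (p : Fin (ℓ + 1) → V) : Prop :=
  Function.Injective p ∧ p 0 = v ∧ 3 ≤ G.degree v ∧
  (∀ i : Fin ℓ, G.Adj (p i.castSucc) (p i.succ)) ∧
  G.degree (p (Fin.last ℓ)) = 1 ∧
  ∀ i : Fin (ℓ + 1), (i : ℕ) ≠ 0 → (i : ℕ) ≠ ℓ → G.degree (p i) = 2

/-- Upper complexity of a path of length `ℓ` (with `ℓ = q(3k+2)+r`). -/
def cbar (k ℓ : ℕ) : ℕ :=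
  2 * (ℓ / (3 * k + 2)) + (if 1 ≤ ℓ % (3 * k + 2) then 1 else 0) +
    (if 2 * k + 2 ≤ ℓ % (3 * k + 2) then 1 else 0)

/-- Lower complexity of a path of length `ℓ` (with `ℓ = q(3k+2)+r`). -/
def clow (k ℓ : ℕ) : ℕ :=
  2 * (ℓ / (3 * k + 2)) + (if k + 1 ≤ ℓ % (3 * k + 2) then 1 else 0) +
    (if 2 * k + 2 ≤ ℓ % (3 * k + 2) then 1 else 0)

/-- The type of a vertex `v` with respect to the sensor pair `(s, s')`. -/
noncomputable def typ (G : SimpleGraph V) (s s' v : V) : ℤ :=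
  ((G.dist v s : ℤ) - (G.dist v s' : ℤ) + (G.dist s s' : ℤ)) / 2

/-- The attraction of the pair of sensors `{s, s'}`. -/
def PairAttraction (G : SimpleGraph V) (k : ℕ) (S : Set V) (s s' : V) : Set V :=
  {x | x ∉ S ∧ DirectlyMeasures G k S s x ∧ DirectlyMeasures G k S s' x ∧
    (∀ t ∈ S, t ≠ s → t ≠ s' → ¬ DirectlyMeasures G k S t x) ∧
    ∀ y : V, y ≠ x → y ∉ S →
      (∀ t ∈ S, t ≠ s → t ≠ s' → ¬ DirectlyMeasures G k S t y) →
      dk G k s x ≠ dk G k s y ∨ dk G k s' x ≠ dk G k s' y}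

/-- The subset of sensors `S' ⊆ S` minimally resolves the vertex `x`. -/
def MinimallyResolves (G : SimpleGraph V) (k : ℕ) (S S' : Set V) (x : V) : Prop :=
  x ∉ S ∧ (∀ s ∈ S', G.dist s x ≤ k) ∧
  (∀ t ∈ S, t ∉ S' → ¬ DirectlyMeasures G k S t x) ∧
  (∀ y : V, y ≠ x → (∀ t ∈ S, t ∉ S' → ¬ DirectlyMeasures G k S t y) →
    ∃ s ∈ S', dk G k s x ≠ dk G k s y) ∧
  (∀ s ∈ S', DirectlyMeasures G k S s x)


private def Ssum (k d : ℕ) : ℚ :=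
  ∑ i ∈ Finset.Icc 1 d, (1 + min ((k : ℚ) - (i : ℚ)) ((k : ℚ) - ((d : ℚ) + 1 - (i : ℚ))))

private def Fform (k d : ℕ) : ℚ :=
  if Even d then (d : ℚ) * k - 3 * (d : ℚ) ^ 2 / 4 + (d : ℚ) / 2
  else (d : ℚ) * k - 3 * (d : ℚ) ^ 2 / 4 + (d : ℚ) / 2 + 1 / 4

private lemma Ssum_range (k d : ℕ) :
    Ssum k d = ∑ i ∈ Finset.range d,
      (1 + min ((k : ℚ) - ((1 + i : ℕ) : ℚ)) ((k : ℚ) - ((d : ℚ) + 1 - ((1 + i : ℕ) : ℚ)))) := by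
  unfold Ssum
  rw [← Finset.Ico_add_one_right_eq_Icc, Finset.sum_Ico_eq_sum_range]
  simp

private lemma Ssum_step (k d : ℕ) : Ssum k (d + 2) = Ssum k d + 2 * (k : ℚ) - 3 * d - 2 := by
  rw [Ssum_range, Ssum_range]
  rw [Finset.sum_range_succ, Finset.sum_range_succ']
  have hmid : ∀ i ∈ Finset.range d,
      (1 + min ((k : ℚ) - ((1 + (i+1) : ℕ) : ℚ)) ((k : ℚ) - (((d+2:ℕ):ℚ) + 1 - ((1 + (i+1) : ℕ) : ℚ))))
      = (1 + min ((k : ℚ) - ((1 + i : ℕ) : ℚ)) ((k : ℚ) - ((d:ℚ) + 1 - ((1 + i : ℕ) : ℚ)))) - 1 := by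
    intro i _
    push_cast
    rw [show (k:ℚ) - (1 + ((i:ℚ)+1)) = ((k:ℚ) - (1 + i)) - 1 by ring,
        show (k:ℚ) - ((d:ℚ)+2+1 - (1 + ((i:ℚ)+1))) = ((k:ℚ) - ((d:ℚ)+1 - (1+i))) - 1 by ring,
        min_sub_sub_right]
    ring
  rw [Finset.sum_congr rfl hmid, Finset.sum_sub_distrib, Finset.sum_const, nsmul_eq_mul, mul_one,
      Finset.card_range]
  have hle1 : (↑k - (((d+2:ℕ)) + 1 - ((1+0:ℕ):ℚ)) : ℚ) ≤ ↑k - ((1+0:ℕ):ℚ) := by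
    push_cast; linarith [Nat.cast_nonneg (α := ℚ) d]
  have hle2 : (↑k - ((1+(d+1):ℕ):ℚ) : ℚ) ≤ ↑k - (((d+2:ℕ)) + 1 - ((1+(d+1):ℕ):ℚ)) := by
    push_cast; linarith [Nat.cast_nonneg (α := ℚ) d]
  rw [min_eq_right hle1, min_eq_left hle2]
  push_cast
  ring

private lemma Ssum_one (k : ℕ) : Ssum k 1 = k := by
  rw [Ssum, show Finset.Icc 1 1 = {1} from rfl, Finset.sum_singleton]
  norm_num

private lemma Ssum_two (k : ℕ) : Ssum k 2 = 2 * k - 2 := by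
  rw [Ssum, show Finset.Icc 1 2 = {1, 2} from rfl]
  rw [Finset.sum_pair (by norm_num)]
  norm_num
  rw [min_eq_right (by linarith : (k:ℚ) - 2 ≤ (k:ℚ) - 1),
      min_eq_left (by linarith : (k:ℚ) - 2 ≤ (k:ℚ) - 1)]
  ring

private lemma Fform_step (k d : ℕ) : Fform k (d + 2) = Fform k d + 2 * (k : ℚ) - 3 * d - 2 := by
  have hpar : Even (d + 2) ↔ Even d := by simp [Nat.even_add]
  by_cases h : Even d
  · rw [Fform, Fform, if_pos (hpar.mpr h), if_pos h]; push_cast; ring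
  · rw [Fform, Fform, if_neg (fun hh => h (hpar.mp hh)), if_neg h]; push_cast; ring

private lemma Ssum_eq_Fform (k : ℕ) : ∀ d : ℕ, 1 ≤ d → Ssum k d = Fform k d := by
  have key : ∀ n : ℕ, Ssum k (n + 1) = Fform k (n + 1) ∧ Ssum k (n + 2) = Fform k (n + 2) := by
    intro n
    induction n with
    | zero =>
      constructor
      · rw [Ssum_one, Fform]; norm_num; ring
      · rw [Ssum_two, Fform]; norm_num; ring
    | succ n ih =>
      refine ⟨ih.2, ?_⟩
      rw [show n + 1 + 2 = (n + 1) + 2 from rfl, Ssum_step, Fform_step, ih.1]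
  intro d hd
  obtain ⟨e, rfl⟩ : ∃ e, d = e + 1 := ⟨d - 1, by omega⟩
  exact (key e).1

private lemma Fform_le (k d : ℕ) :
    Fform k d ≤ if k % 3 = 1 then ((k : ℚ) ^ 2 + k + 1) / 3 else ((k : ℚ) ^ 2 + k) / 3 := by
  by_cases hk3 : k % 3 = 1
  · rw [if_pos hk3]
    by_cases hdE : Even d
    · rw [Fform, if_pos hdE]
      nlinarith [sq_nonneg (3 * (d:ℚ) - 2 * k - 1)]
    · rw [Fform, if_neg hdE]
      nlinarith [sq_nonneg (3 * (d:ℚ) - 2 * k - 1)]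
  · rw [if_neg hk3]
    by_cases hdE : Even d
    · rw [Fform, if_pos hdE]
      have h1 : (3 * (d:ℤ) - 2 * k - 1) ≤ -1 ∨ 1 ≤ (3 * (d:ℤ) - 2 * k - 1) := by omega
      have h2 : (1:ℤ) ≤ (3 * (d:ℤ) - 2 * k - 1) ^ 2 := by rcases h1 with h | h <;> nlinarith
      have h2q : (1:ℚ) ≤ (3 * (d:ℚ) - 2 * k - 1) ^ 2 := by exact_mod_cast h2
      nlinarith [h2q]
    · rw [Fform, if_neg hdE]
      have hd2 : d % 2 = 1 := Nat.odd_iff.mp (Nat.not_even_iff_odd.mp hdE)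
      have h1 : (3 * (d:ℤ) - 2 * k - 1) ≤ -2 ∨ 2 ≤ (3 * (d:ℤ) - 2 * k - 1) := by omega
      have h2 : (4:ℤ) ≤ (3 * (d:ℤ) - 2 * k - 1) ^ 2 := by rcases h1 with h | h <;> nlinarith
      have h2q : (4:ℚ) ≤ (3 * (d:ℚ) - 2 * k - 1) ^ 2 := by exact_mod_cast h2
      nlinarith [h2q]

private lemma Fval0 (k m : ℕ) (hk : k = 3 * m) : Fform k (2 * m) = ((k:ℚ) ^ 2 + k) / 3 := by
  rw [Fform, if_pos (even_two_mul m), hk]; push_cast; ring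

private lemma Fval1 (k m : ℕ) (hk : k = 3 * m + 1) :
    Fform k (2 * m + 1) = ((k:ℚ) ^ 2 + k + 1) / 3 := by
  rw [Fform, if_neg (Nat.not_even_iff.mpr (by omega)), hk]; push_cast; ring

private lemma Fval2 (k m : ℕ) (hk : k = 3 * m + 2) : Fform k (2 * m + 2) = ((k:ℚ) ^ 2 + k) / 3 := by
  rw [Fform, if_pos ⟨m + 1, by ring⟩, hk]; push_cast; ring


/-- closed form and maximization of `Σ_{i=1}^{d}(1 + min{k−i, k−(d+1−i)})`. -/
theorem stmt5 (k : ℕ) (hk : 1 ≤ k) :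
    (∀ d : ℕ, 1 ≤ d → d ≤ k + 1 →
      (∑ i ∈ Finset.Icc 1 d,
          (1 + min ((k : ℚ) - (i : ℚ)) ((k : ℚ) - ((d : ℚ) + 1 - (i : ℚ))))) =
        (if Even d then (d : ℚ) * k - 3 * (d : ℚ) ^ 2 / 4 + (d : ℚ) / 2
         else (d : ℚ) * k - 3 * (d : ℚ) ^ 2 / 4 + (d : ℚ) / 2 + 1 / 4)) ∧
    IsGreatest
      {y : ℚ | ∃ d : ℕ, 1 ≤ d ∧
        y = ∑ i ∈ Finset.Icc 1 d,
          (1 + min ((k : ℚ) - (i : ℚ)) ((k : ℚ) - ((d : ℚ) + 1 - (i : ℚ))))}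
      (if k % 3 = 1 then ((k : ℚ) ^ 2 + k + 1) / 3 else ((k : ℚ) ^ 2 + k) / 3) ∧
    (∑ i ∈ Finset.Icc 1
        (if k % 3 = 0 then 2 * k / 3 else
          if k % 3 = 1 then (2 * k + 1) / 3 else (2 * k + 2) / 3),
        (1 + min ((k : ℚ) - (i : ℚ))
          ((k : ℚ) - (((if k % 3 = 0 then 2 * k / 3 else
            if k % 3 = 1 then (2 * k + 1) / 3 else (2 * k + 2) / 3 : ℕ) : ℚ) + 1 - (i : ℚ))))) =
      (if k % 3 = 1 then ((k : ℚ) ^ 2 + k + 1) / 3 else ((k : ℚ) ^ 2 + k) / 3) := by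
  have h3 : k % 3 = 0 ∨ k % 3 = 1 ∨ k % 3 = 2 := by omega
  refine ⟨?_, ⟨?_, ?_⟩, ?_⟩
  · intro d hd _
    have h := Ssum_eq_Fform k d hd
    rw [Ssum, Fform] at h
    exact h
  · -- membership
    rcases h3 with h | h | h
    · refine ⟨2 * (k / 3), by omega, ?_⟩
      have hS : Ssum k (2 * (k / 3)) = ((k:ℚ) ^ 2 + k) / 3 := by
        rw [Ssum_eq_Fform k _ (by omega), Fval0 k (k / 3) (by omega)]
      rw [Ssum] at hS
      rw [if_neg (by omega), ← hS]
    · refine ⟨2 * (k / 3) + 1, by omega, ?_⟩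
      have hS : Ssum k (2 * (k / 3) + 1) = ((k:ℚ) ^ 2 + k + 1) / 3 := by
        rw [Ssum_eq_Fform k _ (by omega), Fval1 k (k / 3) (by omega)]
      rw [Ssum] at hS
      rw [if_pos h, ← hS]
    · refine ⟨2 * (k / 3) + 2, by omega, ?_⟩
      have hS : Ssum k (2 * (k / 3) + 2) = ((k:ℚ) ^ 2 + k) / 3 := by
        rw [Ssum_eq_Fform k _ (by omega), Fval2 k (k / 3) (by omega)]
      rw [Ssum] at hS
      rw [if_neg (by omega), ← hS]
  · -- upper bound
    rintro y ⟨d, hd, rfl⟩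
    have h := Ssum_eq_Fform k d hd
    rw [Ssum] at h
    rw [h]
    exact Fform_le k d
  · -- value at the maximizer
    rcases h3 with h | h | h
    · have hd0 : (if k % 3 = 0 then 2 * k / 3 else
          if k % 3 = 1 then (2 * k + 1) / 3 else (2 * k + 2) / 3) = 2 * (k / 3) := by
        rw [if_pos h]; omega
      rw [hd0, if_neg (by omega)]
      have hS : Ssum k (2 * (k / 3)) = ((k:ℚ) ^ 2 + k) / 3 := by
        rw [Ssum_eq_Fform k _ (by omega), Fval0 k (k / 3) (by omega)]
      rw [Ssum] at hS
      exact hS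
    · have hd0 : (if k % 3 = 0 then 2 * k / 3 else
          if k % 3 = 1 then (2 * k + 1) / 3 else (2 * k + 2) / 3) = 2 * (k / 3) + 1 := by
        rw [if_neg (by omega), if_pos h]; omega
      rw [hd0, if_pos h]
      have hS : Ssum k (2 * (k / 3) + 1) = ((k:ℚ) ^ 2 + k + 1) / 3 := by
        rw [Ssum_eq_Fform k _ (by omega), Fval1 k (k / 3) (by omega)]
      rw [Ssum] at hS
      exact hS
    · have hd0 : (if k % 3 = 0 then 2 * k / 3 else
          if k % 3 = 1 then (2 * k + 1) / 3 else (2 * k + 2) / 3) = 2 * (k / 3) + 2 := by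
        rw [if_neg (by omega), if_neg (by omega)]; omega
      rw [hd0, if_neg (by omega)]
      have hS : Ssum k (2 * (k / 3) + 2) = ((k:ℚ) ^ 2 + k) / 3 := by
        rw [Ssum_eq_Fform k _ (by omega), Fval2 k (k / 3) (by omega)]
      rw [Ssum] at hS
      exact hS
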